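/- arXiv:1911.10513 — 3 statements merged into one kernel-verified Lean document; each statement's English description precedes it below -/
import Mathlib

section
/- For every finite-dimensional right A-module M, every submodule L of M, and every δ ∈ ℤ^n: δ(dim L) = f_M(δ) if and only if f_{M/L}(δ) = 0 and δ(dim L) = f_L(δ). -/
/-!  Common setup: tropical F-polynomials and general presentations
for a finite-dimensional basic algebra `A` over `k`, following Fei,
"Tropical F-polynomials and general presentations".
All modules are *right* `A`-modules, encoded as left `Aᵐᵒᵖ`-modules. -/

namespace TropGP

open Module MulOpposite

section Defs

variable (k : Type) [Field k]
variable (A : Type) [Ring A] [Algebra k A]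

/-- The right regular `A`-module structure on `A` is compatible with the `k`-action. -/
instance instTowerOpA : IsScalarTower k Aᵐᵒᵖ A :=
  ⟨fun c b x => by
    rw [MulOpposite.smul_eq_mul_unop, MulOpposite.smul_eq_mul_unop, MulOpposite.unop_smul,
      Algebra.mul_smul_comm]⟩

/-- Shortcut instance: scalars of `k` commute with the right `A`-action. -/
instance (priority := 5000) instSMulCommOpK (M : Type) [AddCommGroup M] [Module k M]
    [Module Aᵐᵒᵖ M] [IsScalarTower k Aᵐᵒᵖ M] : SMulCommClass Aᵐᵒᵖ k M :=
  IsScalarTower.to_smulCommClass'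

variable {n : ℕ} (e : Fin n → A)

/-- Pairing of a weight vector with an integral (dimension) vector. -/
def pz (δ β : Fin n → ℤ) : ℤ := ∑ i, δ i * β i

/-- Pairing of an integral weight vector with a real vector. -/
def przr (δ : Fin n → ℤ) (γ : Fin n → ℝ) : ℝ := ∑ i, (δ i : ℝ) * γ i

/-- Pairing of two real vectors. -/
def prr (δ γ : Fin n → ℝ) : ℝ := ∑ i, δ i * γ i

variable (M : Type) [AddCommGroup M] [Module k M] [Module Aᵐᵒᵖ M] [IsScalarTower k Aᵐᵒᵖ M]

/-- Right multiplication by `e i`, as a `k`-linear endomorphism of a right `A`-module. -/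
noncomputable def rmul (i : Fin n) : M →ₗ[k] M where
  toFun x := op (e i) • x
  map_add' x y := smul_add _ x y
  map_smul' c x := smul_comm _ c x

/-- The dimension vector: `i ↦ dim_k (M eᵢ)`. -/
noncomputable def dimVec : Fin n → ℤ :=
  fun i => (finrank k (LinearMap.range (rmul k A e M i)) : ℤ)

/-- The real dimension vector. -/
noncomputable def dimVecR : Fin n → ℝ :=
  fun i => (finrank k (LinearMap.range (rmul k A e M i)) : ℝ)

/-- The tropical F-polynomial: `f_M(δ) = max { δ(dim L) : L ⊆ M }`. -/
noncomputable def tropF (δ : Fin n → ℤ) : ℤ :=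
  sSup (Set.range fun L : Submodule Aᵐᵒᵖ M => pz δ (dimVec k A e L))

/-- The dual tropical F-polynomial: `f̌_M(δ) = max { δ(dim N) : M ↠ N }`. -/
noncomputable def tropCheck (δ : Fin n → ℤ) : ℤ :=
  sSup (Set.range fun L : Submodule Aᵐᵒᵖ M => pz δ (dimVec k A e (M ⧸ L)))

/-- The Newton polytope of `M`: the convex hull of dimension vectors of submodules. -/
noncomputable def newton : Set (Fin n → ℝ) :=
  convexHull ℝ {x | ∃ L : Submodule Aᵐᵒᵖ M, x = dimVecR k A e L}

/-- The dual Newton polytope of `M`: convex hull of dimension vectors of quotients. -/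
noncomputable def newtonCheck : Set (Fin n → ℝ) :=
  convexHull ℝ {x | ∃ L : Submodule Aᵐᵒᵖ M, x = dimVecR k A e (M ⧸ L)}

/-- King's `δ`-semistability. -/
def IsSemistable (δ : Fin n → ℤ) : Prop :=
  pz δ (dimVec k A e M) = 0 ∧ ∀ L : Submodule Aᵐᵒᵖ M, pz δ (dimVec k A e L) ≤ 0

/-- `δ`-semistability for a real weight. -/
def IsSemistableR (δ : Fin n → ℝ) : Prop :=
  prr δ (dimVecR k A e M) = 0 ∧ ∀ L : Submodule Aᵐᵒᵖ M, prr δ (dimVecR k A e L) ≤ 0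

/-- `δ`-stability. -/
def IsStable (δ : Fin n → ℤ) : Prop :=
  pz δ (dimVec k A e M) = 0 ∧
    ∀ L : Submodule Aᵐᵒᵖ M, L ≠ ⊥ → L ≠ ⊤ → pz δ (dimVec k A e L) < 0

section HomE

variable {P Q : Type} [AddCommGroup P] [Module Aᵐᵒᵖ P] [AddCommGroup Q] [Module Aᵐᵒᵖ Q]

/-- The `k`-linear map `Hom_A(Q, M) → Hom_A(P, M)` induced by `d : P → Q`. -/
noncomputable def homMap (d : P →ₗ[Aᵐᵒᵖ] Q) : (Q →ₗ[Aᵐᵒᵖ] M) →ₗ[k] (P →ₗ[Aᵐᵒᵖ] M) where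
  toFun f := f ∘ₗ d
  map_add' f g := LinearMap.add_comp _ _ _
  map_smul' c f := LinearMap.smul_comp _ _ _

/-- `dim_k Hom(d, M)`: the kernel of the induced map. -/
noncomputable def homNum (d : P →ₗ[Aᵐᵒᵖ] Q) : ℕ :=
  finrank k (LinearMap.ker (homMap k A M d))

/-- `dim_k E(d, M)`: the cokernel of the induced map. -/
noncomputable def eNum (d : P →ₗ[Aᵐᵒᵖ] Q) : ℕ :=
  finrank k ((P →ₗ[Aᵐᵒᵖ] M) ⧸ LinearMap.range (homMap k A M d))

end HomE

/-- The indecomposable projective right module `e i · A`. -/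
abbrev projP (i : Fin n) : Submodule Aᵐᵒᵖ A := Submodule.span Aᵐᵒᵖ {e i}

/-- The projective right module `P(β) = ⊕ᵢ (eᵢA)^{β i}`. -/
abbrev PP (β : Fin n → ℕ) : Type := Π i : Fin n, Fin (β i) → projP A e i

/-- The weight condition `β₊ - β₋ = δ`. -/
def HasWt (βm βp : Fin n → ℕ) (δ : Fin n → ℤ) : Prop :=
  ∀ i, (βp i : ℤ) - (βm i : ℤ) = δ i

/-- The cokernel of a projective presentation. -/
abbrev Coker {βm βp : Fin n → ℕ} (d : PP A e βm →ₗ[Aᵐᵒᵖ] PP A e βp) : Type :=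
  PP A e βp ⧸ LinearMap.range d

/-- `hom(δ, M)`: min of `dim_k Hom(d,M)` over projective presentations `d` of weight `δ`. -/
noncomputable def homWt (δ : Fin n → ℤ) : ℕ :=
  sInf {m : ℕ | ∃ (βm βp : Fin n → ℕ) (d : PP A e βm →ₗ[Aᵐᵒᵖ] PP A e βp),
    HasWt βm βp δ ∧ m = homNum k A M d}

/-- `e(δ, M)`: min of `dim_k E(d,M)` over projective presentations `d` of weight `δ`. -/
noncomputable def eWt (δ : Fin n → ℤ) : ℕ :=
  sInf {m : ℕ | ∃ (βm βp : Fin n → ℕ) (d : PP A e βm →ₗ[Aᵐᵒᵖ] PP A e βp),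
    HasWt βm βp δ ∧ m = eNum k A M d}

/-- The indecomposable left module `A · e i`. -/
abbrev projL (i : Fin n) : Submodule A A := Submodule.span A {e i}

section DualMod

variable (V : Type) [AddCommGroup V] [Module k V] [Module A V] [IsScalarTower k A V]

/-- Left multiplication by `a` as a `k`-linear endomorphism of a left module. -/
noncomputable def lact (a : A) : V →ₗ[k] V where
  toFun x := a • x
  map_add' x y := smul_add a x y
  map_smul' c x := smul_comm a c x

/-- The right `A`-action on the `k`-dual of a left `A`-module. -/
noncomputable instance dualSMul : SMul Aᵐᵒᵖ (V →ₗ[k] k) :=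
  ⟨fun a f => f ∘ₗ lact k A V a.unop⟩

@[simp] lemma dual_smul_apply (a : Aᵐᵒᵖ) (f : V →ₗ[k] k) (x : V) :
    (a • f) x = f (a.unop • x) := rfl

/-- The `k`-dual of a left `A`-module is a right `A`-module. -/
noncomputable instance dualModule : Module Aᵐᵒᵖ (V →ₗ[k] k) :=
  { dualSMul k A V with
    one_smul := fun f => by ext x; simp
    mul_smul := fun a b f => by ext x; simp [mul_smul]
    smul_zero := fun a => by ext x; simp
    smul_add := fun a f g => by ext x; simp
    add_smul := fun a b f => by ext x; simp [add_smul]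
    zero_smul := fun f => by ext x; simp }

instance dualSMulComm : SMulCommClass Aᵐᵒᵖ k (V →ₗ[k] k) :=
  ⟨fun a c f => by ext x; simp⟩

instance dualTower : IsScalarTower k Aᵐᵒᵖ (V →ₗ[k] k) :=
  ⟨fun c a f => by ext x; simp [MulOpposite.unop_smul, smul_assoc]⟩

end DualMod

/-- The indecomposable injective right module `Iᵢ = D(A eᵢ)`,
the `k`-dual of the left module `A eᵢ`. -/
abbrev IP (i : Fin n) : Type := (projL A e i) →ₗ[k] k

/-- The injective right module `I(β) = ⊕ᵢ Iᵢ^{β i}`. -/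
abbrev IM (β : Fin n → ℕ) : Type := Π i : Fin n, Fin (β i) → IP k A e i

section PostMap

variable {I J : Type} [AddCommGroup I] [Module k I] [Module Aᵐᵒᵖ I] [IsScalarTower k Aᵐᵒᵖ I]
variable [AddCommGroup J] [Module k J] [Module Aᵐᵒᵖ J] [IsScalarTower k Aᵐᵒᵖ J]

/-- The `k`-linear map `Hom_A(M, I) → Hom_A(M, J)` induced by `dc : I → J`. -/
noncomputable def postMap (dc : I →ₗ[Aᵐᵒᵖ] J) :
    (M →ₗ[Aᵐᵒᵖ] I) →ₗ[k] (M →ₗ[Aᵐᵒᵖ] J) where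
  toFun f := dc ∘ₗ f
  map_add' f g := LinearMap.comp_add _ _ _
  map_smul' c f := by
    ext x
    simp only [LinearMap.comp_apply, LinearMap.smul_apply, RingHom.id_apply]
    rw [← algebraMap_smul Aᵐᵒᵖ c (f x), LinearMap.map_smul, algebraMap_smul]

end PostMap

/-- `hom(M, δ̌)`: min of `dim_k Hom(M, ď)` over injective presentations `ď` of weight `δ̌`. -/
noncomputable def ihomWt (δc : Fin n → ℤ) : ℕ :=
  sInf {m : ℕ | ∃ (βp βm : Fin n → ℕ) (dc : IM k A e βp →ₗ[Aᵐᵒᵖ] IM k A e βm),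
    HasWt βm βp δc ∧ m = finrank k (LinearMap.ker (postMap k A M dc))}

/-- `ě(M, δ̌)`: min of `dim_k Ě(M, ď)` over injective presentations `ď` of weight `δ̌`. -/
noncomputable def ieWt (δc : Fin n → ℤ) : ℕ :=
  sInf {m : ℕ | ∃ (βp βm : Fin n → ℕ) (dc : IM k A e βp →ₗ[Aᵐᵒᵖ] IM k A e βm),
    HasWt βm βp δc ∧
      m = finrank k (@HasQuotient.Quotient (M →ₗ[Aᵐᵒᵖ] IM k A e βm) _ Submodule.hasQuotient
        (LinearMap.range (postMap k A M dc)))}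

/-- `e(δ, δ) = 0`: there are projective presentations `d, d'` of weight `δ` with
`E(d, Coker d') = 0`, i.e. the induced map on `Hom`s is surjective. -/
def EWtSelfZero (δ : Fin n → ℤ) : Prop :=
  ∃ (βm βp : Fin n → ℕ) (d : PP A e βm →ₗ[Aᵐᵒᵖ] PP A e βp)
    (βm' βp' : Fin n → ℕ) (d' : PP A e βm' →ₗ[Aᵐᵒᵖ] PP A e βp'),
    HasWt βm βp δ ∧ HasWt βm' βp' δ ∧
      Function.Surjective (homMap k A (Coker A e d') d)

/-- `e₁, …, e_n` is a complete set of primitive orthogonal idempotents and `A` is basic: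
the indecomposable projectives `eᵢA` are pairwise non-isomorphic. -/
def IsBasicSetup : Prop :=
  (∀ i, IsIdempotentElem (e i)) ∧
  (∀ i j, i ≠ j → e i * e j = 0) ∧
  (∑ i, e i = 1) ∧
  (∀ i, e i ≠ 0 ∧ ∀ f g : A, IsIdempotentElem f → IsIdempotentElem g →
      f * g = 0 → g * f = 0 → f + g = e i → f = 0 ∨ g = 0) ∧
  (∀ i j, i ≠ j → IsEmpty (projP A e i ≃ₗ[Aᵐᵒᵖ] projP A e j))

end Defs

end TropGP

open TropGP Module MulOpposite

section Helpers
variable (k : Type) [Field k]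
variable (A : Type) [Ring A] [Algebra k A]
variable {n : ℕ} (e : Fin n → A)
variable (M : Type) [AddCommGroup M] [Module k M] [Module Aᵐᵒᵖ M] [IsScalarTower k Aᵐᵒᵖ M]

lemma rmul_apply' (i : Fin n) (x : M) : rmul k A e M i x = op (e i) • x := rfl

lemma mem_range_rmul_iff {i : Fin n} (he : IsIdempotentElem (e i)) (x : M) :
    x ∈ LinearMap.range (rmul k A e M i) ↔ rmul k A e M i x = x := by
  constructor
  · rintro ⟨y, rfl⟩
    simp only [rmul_apply', smul_smul, ← op_mul, he.eq]
  · intro h; exact ⟨x, h⟩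

lemma map_rmul_restrict {i : Fin n} (he : IsIdempotentElem (e i)) (N : Submodule Aᵐᵒᵖ M) :
    (N.restrictScalars k).map (rmul k A e M i)
      = N.restrictScalars k ⊓ LinearMap.range (rmul k A e M i) := by
  ext x
  simp only [Submodule.mem_map, Submodule.mem_inf, Submodule.restrictScalars_mem,
    LinearMap.mem_range]
  constructor
  · rintro ⟨y, hy, rfl⟩
    exact ⟨N.smul_mem _ hy, ⟨y, rfl⟩⟩
  · rintro ⟨hx, hr⟩
    exact ⟨x, hx, (mem_range_rmul_iff k A e M he x).1 ⟨hr.choose, hr.choose_spec⟩⟩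

/-- dimVec of a submodule, computed inside the ambient module. -/
lemma dimVec_submodule (he : ∀ i, IsIdempotentElem (e i)) (N : Submodule Aᵐᵒᵖ M) (i : Fin n) :
    dimVec k A e ↥N i =
      (finrank k ↥(N.restrictScalars k ⊓ LinearMap.range (rmul k A e M i)) : ℤ) := by
  unfold dimVec
  norm_cast
  set ι : ↥N →ₗ[k] M := N.subtype.restrictScalars k with hιdef
  have hι : Function.Injective ι := Subtype.val_injective
  have h1 : finrank k ↥(LinearMap.range (rmul k A e ↥N i))
      = finrank k ↥((LinearMap.range (rmul k A e ↥N i)).map ι) :=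
    (Submodule.equivMapOfInjective ι hι _).finrank_eq
  have hcomm : ι ∘ₗ rmul k A e ↥N i = rmul k A e M i ∘ₗ ι := by ext x; rfl
  have hrι : LinearMap.range ι = N.restrictScalars k := by
    ext x
    simp only [LinearMap.mem_range, Submodule.restrictScalars_mem]
    exact ⟨fun ⟨y, hy⟩ => hy ▸ y.2, fun hx => ⟨⟨x, hx⟩, rfl⟩⟩
  have heq : (LinearMap.range (rmul k A e ↥N i)).map ι
      = N.restrictScalars k ⊓ LinearMap.range (rmul k A e M i) :=
   calc (LinearMap.range (rmul k A e ↥N i)).map ι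
      = LinearMap.range (ι ∘ₗ rmul k A e ↥N i) := (LinearMap.range_comp _ _).symm
    _ = LinearMap.range (rmul k A e M i ∘ₗ ι) := by rw [hcomm]
    _ = (LinearMap.range ι).map (rmul k A e M i) := LinearMap.range_comp _ _
    _ = _ := by rw [hrι, map_rmul_restrict k A e M (he i)]
  rw [h1, heq]

/-- dimVec is invariant under `Aᵐᵒᵖ`-linear equivalence. -/
lemma dimVec_congr (M₂ : Type) [AddCommGroup M₂] [Module k M₂] [Module Aᵐᵒᵖ M₂]
    [IsScalarTower k Aᵐᵒᵖ M₂] (f : M ≃ₗ[Aᵐᵒᵖ] M₂) (i : Fin n) :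
    dimVec k A e M i = dimVec k A e M₂ i := by
  unfold dimVec
  norm_cast
  set g : M ≃ₗ[k] M₂ := f.restrictScalars k with hg
  set gl : M →ₗ[k] M₂ := (g : M →ₗ[k] M₂) with hgl
  have hinj : Function.Injective gl := g.injective
  have hcomm : gl ∘ₗ rmul k A e M i = rmul k A e M₂ i ∘ₗ gl := by
    ext x
    exact f.map_smul (op (e i)) x
  have htop : LinearMap.range gl = ⊤ := LinearMap.range_eq_top.2 g.surjective
  have heq : (LinearMap.range (rmul k A e M i)).map gl
      = LinearMap.range (rmul k A e M₂ i) :=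
    calc (LinearMap.range (rmul k A e M i)).map gl
        = LinearMap.range (gl ∘ₗ rmul k A e M i) := (LinearMap.range_comp _ _).symm
      _ = LinearMap.range (rmul k A e M₂ i ∘ₗ gl) := by rw [hcomm]
      _ = (LinearMap.range gl).map (rmul k A e M₂ i) := LinearMap.range_comp _ _
      _ = (⊤ : Submodule k M₂).map (rmul k A e M₂ i) := by rw [htop]
      _ = LinearMap.range (rmul k A e M₂ i) := Submodule.map_top _
  rw [(Submodule.equivMapOfInjective gl hinj (LinearMap.range (rmul k A e M i))).finrank_eq,
    heq]

variable [FiniteDimensional k M]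

/-- Rank additivity along `0 → N ⊓ L → N → (N+L)/L → 0`. -/
lemma dv_additive (he : ∀ i, IsIdempotentElem (e i)) (L N : Submodule Aᵐᵒᵖ M) (i : Fin n) :
    finrank k ↥(N.restrictScalars k ⊓ LinearMap.range (rmul k A e M i)) =
      finrank k ↥((N ⊓ L).restrictScalars k ⊓ LinearMap.range (rmul k A e M i)) +
      finrank k ↥((N.map L.mkQ).restrictScalars k ⊓
        LinearMap.range (rmul k A e (M ⧸ L) i)) := by
  set W := N.restrictScalars k ⊓ LinearMap.range (rmul k A e M i) with hW
  set f : ↥W →ₗ[k] M ⧸ L := (L.mkQ.restrictScalars k) ∘ₗ W.subtype with hf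
  have hq : ∀ x : M, L.mkQ (op (e i) • x) = op (e i) • L.mkQ x := fun x =>
    L.mkQ.map_smul (op (e i)) x
  have hrange : LinearMap.range f
      = (N.map L.mkQ).restrictScalars k ⊓ LinearMap.range (rmul k A e (M ⧸ L) i) := by
    ext y
    simp only [LinearMap.mem_range, Submodule.mem_inf, Submodule.restrictScalars_mem,
      Submodule.mem_map]
    constructor
    · rintro ⟨⟨x, hx⟩, rfl⟩
      obtain ⟨hxN, hxr⟩ := Submodule.mem_inf.1 hx
      refine ⟨⟨x, hxN, rfl⟩, ?_⟩
      have hxfix : rmul k A e M i x = x := (mem_range_rmul_iff k A e M (he i) x).1 hxr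
      refine (mem_range_rmul_iff k A e (M ⧸ L) (he i) _).2 ?_
      show op (e i) • (L.mkQ x) = L.mkQ x
      rw [← hq]
      exact congrArg L.mkQ hxfix
    · rintro ⟨⟨m, hmN, rfl⟩, hyr⟩
      have hyfix : rmul k A e (M ⧸ L) i (L.mkQ m) = L.mkQ m :=
        (mem_range_rmul_iff k A e (M ⧸ L) (he i) _).1 hyr
      refine ⟨⟨op (e i) • m, Submodule.mem_inf.2 ⟨N.smul_mem _ hmN, ⟨m, rfl⟩⟩⟩, ?_⟩
      show L.mkQ (op (e i) • m) = L.mkQ m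
      rw [hq]
      exact hyfix
  have hker : finrank k ↥(LinearMap.ker f)
      = finrank k ↥((N ⊓ L).restrictScalars k ⊓ LinearMap.range (rmul k A e M i)) := by
    rw [(Submodule.equivMapOfInjective W.subtype Subtype.val_injective
      (LinearMap.ker f)).finrank_eq]
    have hmapeq : (LinearMap.ker f).map W.subtype
        = (N ⊓ L).restrictScalars k ⊓ LinearMap.range (rmul k A e M i) := by
      ext x
      simp only [Submodule.mem_map, LinearMap.mem_ker, Submodule.mem_inf,
        Submodule.restrictScalars_mem]
      constructor
      · rintro ⟨⟨x, hx⟩, hx0, rfl⟩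
        obtain ⟨hxN, hxr⟩ := Submodule.mem_inf.1 hx
        have hxL : x ∈ L := by
          have : L.mkQ x = 0 := hx0
          rwa [L.mkQ_apply, Submodule.Quotient.mk_eq_zero] at this
        exact ⟨⟨hxN, hxL⟩, hxr⟩
      · rintro ⟨⟨hxN, hxL⟩, hxr⟩
        refine ⟨⟨x, Submodule.mem_inf.2 ⟨hxN, hxr⟩⟩, ?_, rfl⟩
        show L.mkQ x = 0
        rw [L.mkQ_apply, Submodule.Quotient.mk_eq_zero]
        exact hxL
    rw [hmapeq]
  have hrn := LinearMap.finrank_range_add_finrank_ker f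
  rw [hrange, hker] at hrn
  omega

lemma pz_congr (δ : Fin n → ℤ) {β γ : Fin n → ℤ} (h : ∀ i, β i = γ i) : pz δ β = pz δ γ :=
  Finset.sum_congr rfl fun i _ => by rw [h i]

/-- Splitting of `pz` along a submodule `L`. -/
lemma pz_split (he : ∀ i, IsIdempotentElem (e i)) (L N : Submodule Aᵐᵒᵖ M) (δ : Fin n → ℤ) :
    pz δ (dimVec k A e ↥N) =
      pz δ (dimVec k A e ↥(N ⊓ L)) + pz δ (dimVec k A e ↥(N.map L.mkQ)) := by
  unfold pz
  rw [← Finset.sum_add_distrib]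
  refine Finset.sum_congr rfl fun i _ => ?_
  rw [dimVec_submodule k A e M he N i, dimVec_submodule k A e M he (N ⊓ L) i,
    dimVec_submodule k A e (M ⧸ L) he (N.map L.mkQ) i, ← mul_add]
  congr 1
  exact_mod_cast dv_additive k A e M he L N i

lemma pz_dimVec_le (he : ∀ i, IsIdempotentElem (e i)) (δ : Fin n → ℤ) (N : Submodule Aᵐᵒᵖ M) :
    pz δ (dimVec k A e ↥N) ≤ ∑ i, |δ i| * (finrank k M : ℤ) := by
  refine Finset.sum_le_sum fun i _ => ?_
  rw [dimVec_submodule k A e M he N i]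
  have h1 : ((finrank k ↥(N.restrictScalars k ⊓ LinearMap.range (rmul k A e M i))) : ℤ)
      ≤ (finrank k M : ℤ) := by exact_mod_cast Submodule.finrank_le _
  calc δ i * _ ≤ |δ i| * _ :=
        mul_le_mul_of_nonneg_right (le_abs_self _) (Int.natCast_nonneg _)
    _ ≤ |δ i| * (finrank k M : ℤ) := mul_le_mul_of_nonneg_left h1 (abs_nonneg _)

lemma bddAbove_pz (he : ∀ i, IsIdempotentElem (e i)) (δ : Fin n → ℤ) :
    BddAbove (Set.range fun N : Submodule Aᵐᵒᵖ M => pz δ (dimVec k A e ↥N)) := by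
  refine ⟨∑ i, |δ i| * (finrank k M : ℤ), ?_⟩
  rintro x ⟨N, rfl⟩
  exact pz_dimVec_le k A e M he δ N

lemma pz_dimVec_bot (he : ∀ i, IsIdempotentElem (e i)) (δ : Fin n → ℤ) :
    pz δ (dimVec k A e ↥(⊥ : Submodule Aᵐᵒᵖ M)) = 0 := by
  refine Finset.sum_eq_zero fun i _ => ?_
  rw [dimVec_submodule k A e M he ⊥ i]
  rw [Submodule.restrictScalars_bot, bot_inf_eq, finrank_bot]
  simp

end Helpers

/-- For every submodule `L ⊆ M` and `δ ∈ ℤⁿ`: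
`δ(dim L) = f_M(δ)` iff `f_{M/L}(δ) = 0` and `δ(dim L) = f_L(δ)`. -/
theorem statement10 (k : Type) [Field k] [IsAlgClosed k] [CharZero k]
    (A : Type) [Ring A] [Algebra k A] [FiniteDimensional k A]
    {n : ℕ} (e : Fin n → A) (hA : IsBasicSetup A e)
    (M : Type) [AddCommGroup M] [Module k M] [Module Aᵐᵒᵖ M]
    [IsScalarTower k Aᵐᵒᵖ M] [FiniteDimensional k M]
    (L : Submodule Aᵐᵒᵖ M) (δ : Fin n → ℤ) :
    pz δ (dimVec k A e L) = tropF k A e M δ ↔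
      tropF k A e (M ⧸ L) δ = 0 ∧ pz δ (dimVec k A e L) = tropF k A e L δ := by
  obtain ⟨he, -⟩ := hA
  haveI : FiniteDimensional k (M ⧸ L) :=
    Module.Finite.of_surjective (L.mkQ.restrictScalars k) (Submodule.mkQ_surjective L)
  haveI : FiniteDimensional k ↥L :=
    FiniteDimensional.of_injective (L.subtype.restrictScalars k) Subtype.val_injective
  have hbM := bddAbove_pz k A e M he δ
  have hbQ := bddAbove_pz k A e (M ⧸ L) he δ
  have hbL := bddAbove_pz k A e ↥L he δ
  constructor
  · intro h
    have hzero : tropF k A e (M ⧸ L) δ = 0 := by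
      apply le_antisymm
      · apply csSup_le (Set.range_nonempty _)
        rintro x ⟨N', rfl⟩
        dsimp only
        have hLle : L ≤ Submodule.comap L.mkQ N' := fun x hx => by
          have : L.mkQ x = 0 := by rw [L.mkQ_apply, Submodule.Quotient.mk_eq_zero]; exact hx
          simpa [Submodule.mem_comap, this] using N'.zero_mem
        have hsplit := pz_split k A e M he L (Submodule.comap L.mkQ N') δ
        rw [inf_eq_right.mpr hLle,
          Submodule.map_comap_eq_of_surjective (Submodule.mkQ_surjective L) N'] at hsplit
        have h3 : pz δ (dimVec k A e ↥(Submodule.comap L.mkQ N')) ≤ tropF k A e M δ :=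
          le_csSup hbM ⟨_, rfl⟩
        rw [hsplit, ← h] at h3
        linarith
      · rw [← pz_dimVec_bot k A e (M ⧸ L) he δ]
        exact le_csSup hbQ ⟨⊥, rfl⟩
    refine ⟨hzero, ?_⟩
    apply le_antisymm
    · have htop : pz δ (dimVec k A e ↥(⊤ : Submodule Aᵐᵒᵖ ↥L)) = pz δ (dimVec k A e ↥L) :=
        pz_congr δ fun i => dimVec_congr k A e _ ↥L Submodule.topEquiv i
      rw [← htop]
      exact le_csSup hbL ⟨⊤, rfl⟩
    · apply csSup_le (Set.range_nonempty _)
      rintro x ⟨N', rfl⟩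
      dsimp only
      have hc : pz δ (dimVec k A e ↥N') = pz δ (dimVec k A e ↥(N'.map L.subtype)) :=
        pz_congr δ fun i => dimVec_congr k A e _ _
          (Submodule.equivMapOfInjective L.subtype Subtype.val_injective N') i
      rw [hc, h]
      exact le_csSup hbM ⟨_, rfl⟩
  · rintro ⟨h0, hL⟩
    apply le_antisymm (le_csSup hbM ⟨L, rfl⟩)
    apply csSup_le (Set.range_nonempty _)
    rintro x ⟨N, rfl⟩
    dsimp only
    have hsplit := pz_split k A e M he L N δ
    have hb1 : pz δ (dimVec k A e ↥(N ⊓ L)) ≤ pz δ (dimVec k A e ↥L) := by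
      have hc : pz δ (dimVec k A e ↥(Submodule.comap L.subtype (N ⊓ L)))
          = pz δ (dimVec k A e ↥(N ⊓ L)) :=
        pz_congr δ fun i => dimVec_congr k A e _ _
          (Submodule.comapSubtypeEquivOfLe inf_le_right) i
      rw [← hc, hL]
      exact le_csSup hbL ⟨_, rfl⟩
    have hb2 : pz δ (dimVec k A e ↥(N.map L.mkQ)) ≤ 0 := by
      rw [← h0]
      exact le_csSup hbQ ⟨_, rfl⟩
    linarith
end

section
/- Let d₀, d₋, d₊ be projective presentations of finitely generated projective right A-modules such that: E(d₀ ⊕ d₊, Coker(d₀ ⊕ d₊)) = 0; E(d₋, Coker d₀) = 0; E(d₋, Coker d₋) = 0; and dim_k E(d₋, Coker d₊) = 1. Set L := Coker d₊ and N^τ := ker ν(d₋). Then dim_k Hom_A(L, N^τ) = 1, and the image I of a nonzero homomorphism L → N^τ satisfies: Hom_A(Coker d₀, I) = 0 and E(d₀, I) = 0; dim_k Hom_A(Coker d₊, I) = 1 and E(d₊, I) = 0; Hom_A(Coker d₋, I) = 0 and dim_k E(d₋, I) = 1. Moreover End_A(I) = k and Ext¹_A(I, I) = 0 (I is real Schur).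 -/
open TropGP Module MulOpposite

section Nakayama

variable (k : Type) [Field k] (A : Type) [Ring A] [Algebra k A]

/-- The Nakayama functor on objects: `ν(P) = Hom_A(P, A)^*`, a right `A`-module
(the right `A`-module structure on the `k`-dual of the left module `Hom_A(P,A)`
is the instance `TropGP.dualModule`). -/
abbrev Nu (P : Type) [AddCommGroup P] [Module Aᵐᵒᵖ P] : Type :=
  (P →ₗ[Aᵐᵒᵖ] A) →ₗ[k] k

variable {P Q : Type} [AddCommGroup P] [Module Aᵐᵒᵖ P] [AddCommGroup Q] [Module Aᵐᵒᵖ Q]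

/-- The Nakayama functor on morphisms: `ν(d) : ν(P) → ν(Q)` for `d : P → Q`. -/
noncomputable def nuMap (d : P →ₗ[Aᵐᵒᵖ] Q) : Nu k A P →ₗ[Aᵐᵒᵖ] Nu k A Q where
  toFun φ := φ ∘ₗ homMap k A A d
  map_add' φ ψ := LinearMap.add_comp _ _ _
  map_smul' a φ := rfl

end Nakayama

/-- `Ext¹_A(L, L) = 0`: every self-extension `0 → L → E → L → 0` splits. -/
def Ext1SelfVanishes (A : Type) [Ring A] (L : Type) [AddCommGroup L] [Module Aᵐᵒᵖ L] : Prop :=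
  ∀ (E : Type) (igE : AddCommGroup E), letI := igE;
  ∀ (imE : Module Aᵐᵒᵖ E), letI := imE;
  ∀ (ι : L →ₗ[Aᵐᵒᵖ] E) (π : E →ₗ[Aᵐᵒᵖ] L),
    Function.Injective ι → Function.Surjective π → LinearMap.range ι = LinearMap.ker π →
    ∃ σ : L →ₗ[Aᵐᵒᵖ] E, π ∘ₗ σ = LinearMap.id

open TropGP Module MulOpposite LinearMap Function

section Aux

variable (k : Type) [Field k] (A : Type) [Ring A] [Algebra k A]

section KLin

variable {M M' : Type}
  [AddCommGroup M] [Module k M] [Module Aᵐᵒᵖ M] [IsScalarTower k Aᵐᵒᵖ M]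
  [AddCommGroup M'] [Module k M'] [Module Aᵐᵒᵖ M'] [IsScalarTower k Aᵐᵒᵖ M']

lemma op_map_ksmul (f : M →ₗ[Aᵐᵒᵖ] M') (c : k) (x : M) : f (c • x) = c • f x := by
  rw [← smul_one_smul Aᵐᵒᵖ c x, map_smul, smul_one_smul]

/-- View an `Aᵐᵒᵖ`-linear map between `k`-structured modules as a `k`-linear map. -/
noncomputable def kify (f : M →ₗ[Aᵐᵒᵖ] M') : M →ₗ[k] M' where
  toFun := f
  map_add' := f.map_add
  map_smul' c x := op_map_ksmul k A f c x

lemma fd_of_opInj [FiniteDimensional k M'] (f : M →ₗ[Aᵐᵒᵖ] M') (hf : Function.Injective f) :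
    FiniteDimensional k M :=
  FiniteDimensional.of_injective (kify k A f) hf

lemma fd_of_opSurj [FiniteDimensional k M] (f : M →ₗ[Aᵐᵒᵖ] M') (hf : Function.Surjective f) :
    FiniteDimensional k M' :=
  Module.Finite.of_surjective (kify k A f) hf

noncomputable def kifyL : (M →ₗ[Aᵐᵒᵖ] M') →ₗ[k] (M →ₗ[k] M') where
  toFun f := kify k A f
  map_add' f g := rfl
  map_smul' c f := rfl

lemma kifyL_inj : Function.Injective (kifyL k A (M := M) (M' := M')) := by
  intro f g h
  ext x
  exact LinearMap.congr_fun h x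

instance fd_hom [FiniteDimensional k M] [FiniteDimensional k M'] :
    FiniteDimensional k (M →ₗ[Aᵐᵒᵖ] M') :=
  FiniteDimensional.of_injective (kifyL k A) (kifyL_inj k A)

end KLin

variable {n : ℕ} (e : Fin n → A)

/-- The coordinate functional of `PP A e β` at `j`. -/
noncomputable def coordFun (β : Fin n → ℕ) (j : Σ i : Fin n, Fin (β i)) :
    PP A e β →ₗ[Aᵐᵒᵖ] A :=
  (projP A e j.1).subtype ∘ₗ (LinearMap.proj j.2) ∘ₗ (LinearMap.proj j.1)

/-- The standard generator of `PP A e β` at `j`. -/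
noncomputable def basElt (β : Fin n → ℕ) (j : Σ i : Fin n, Fin (β i)) : PP A e β :=
  Pi.single j.1 (Pi.single j.2 ⟨e j.1, Submodule.subset_span rfl⟩)

lemma span_ei_mul {i : Fin n} (hid : IsIdempotentElem (e i)) {a : A}
    (ha : a ∈ projP A e i) : e i * a = a := by
  obtain ⟨c, rfl⟩ := Submodule.mem_span_singleton.mp ha
  rw [MulOpposite.smul_eq_mul_unop, ← mul_assoc, hid.eq]

lemma sum_coord_smul_basElt (hid : ∀ i, IsIdempotentElem (e i)) (β : Fin n → ℕ)
    (p : PP A e β) :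
    ∑ j : (Σ i : Fin n, Fin (β i)), op (coordFun A e β j p) • basElt A e β j = p := by
  funext i t
  rw [Finset.sum_apply, Finset.sum_apply]
  rw [Fintype.sum_eq_single (⟨i, t⟩ : Σ i : Fin n, Fin (β i))]
  · refine Subtype.ext ?_
    show ((op (coordFun A e β ⟨i, t⟩ p) • basElt A e β ⟨i, t⟩) i t : A) = (p i t : A)
    unfold basElt coordFun
    simp only [Pi.smul_apply, Pi.single_eq_same, LinearMap.comp_apply, LinearMap.proj_apply,
      Submodule.coe_subtype, SetLike.val_smul]
    exact span_ei_mul A e (hid i) (p i t).2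
  · rintro ⟨i', t'⟩ hne
    by_cases hi : i' = i
    · subst hi
      have ht : t' ≠ t := by rintro rfl; exact hne rfl
      unfold basElt
      simp only [Pi.smul_apply, Pi.single_eq_same]
      rw [Pi.single_eq_of_ne (fun h : t = t' => ht h.symm), smul_zero]
    · unfold basElt
      simp only [Pi.smul_apply]
      rw [Pi.single_eq_of_ne (fun h : i = i' => hi h.symm)]
      simp

/-- `p ↦ op (φ p) • y` as an `Aᵐᵒᵖ`-linear map. -/
noncomputable def opSmulMap {P N : Type} [AddCommGroup P] [Module Aᵐᵒᵖ P]
    [AddCommGroup N] [Module Aᵐᵒᵖ N] (φ : P →ₗ[Aᵐᵒᵖ] A) (y : N) : P →ₗ[Aᵐᵒᵖ] N where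
  toFun p := op (φ p) • y
  map_add' p q := by
    show op (φ (p + q)) • y = op (φ p) • y + op (φ q) • y
    rw [map_add, op_add, add_smul]
  map_smul' a p := by
    show op (φ (a • p)) • y = a • (op (φ p) • y)
    rw [map_smul, MulOpposite.smul_eq_mul_unop, op_mul, op_unop, mul_smul]

@[simp] lemma opSmulMap_apply {P N : Type} [AddCommGroup P] [Module Aᵐᵒᵖ P]
    [AddCommGroup N] [Module Aᵐᵒᵖ N] (φ : P →ₗ[Aᵐᵒᵖ] A) (y : N) (p : P) :
    opSmulMap A φ y p = op (φ p) • y := rfl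

lemma sum_smul_coordFun (hid : ∀ i, IsIdempotentElem (e i)) (β : Fin n → ℕ)
    {N : Type} [AddCommGroup N] [Module Aᵐᵒᵖ N] (g : PP A e β →ₗ[Aᵐᵒᵖ] N) (p : PP A e β) :
    ∑ j : (Σ i : Fin n, Fin (β i)), op (coordFun A e β j p) • g (basElt A e β j) = g p := by
  conv_rhs => rw [← sum_coord_smul_basElt A e hid β p]
  rw [map_sum]
  simp only [map_smul]

lemma sum_opSmulMap_coordFun (hid : ∀ i, IsIdempotentElem (e i)) (β : Fin n → ℕ)
    {N : Type} [AddCommGroup N] [Module Aᵐᵒᵖ N] (g : PP A e β →ₗ[Aᵐᵒᵖ] N) :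
    ∑ j : (Σ i : Fin n, Fin (β i)), opSmulMap A (coordFun A e β j) (g (basElt A e β j)) = g := by
  refine LinearMap.ext fun p => ?_
  rw [LinearMap.sum_apply]
  simp only [opSmulMap_apply]
  exact sum_smul_coordFun A e hid β g p

/-- Dual-basis expansion in `Hom(P, A)`, with respect to the left `A`-action. -/
lemma sum_coord_smul_fun (hid : ∀ i, IsIdempotentElem (e i)) (β : Fin n → ℕ)
    (φ : PP A e β →ₗ[Aᵐᵒᵖ] A) :
    ∑ j : (Σ i : Fin n, Fin (β i)), φ (basElt A e β j) • coordFun A e β j = φ := by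
  refine LinearMap.ext fun p => ?_
  rw [LinearMap.sum_apply]
  simp only [LinearMap.smul_apply, smul_eq_mul]
  conv_rhs => rw [← sum_smul_coordFun A e hid β φ p]
  simp only [MulOpposite.smul_eq_mul_unop, unop_op]

/-- `PP A e β` is projective: maps from it lift along surjections. -/
lemma pp_lift (hid : ∀ i, IsIdempotentElem (e i)) (β : Fin n → ℕ)
    {M N' : Type} [AddCommGroup M] [Module Aᵐᵒᵖ M] [AddCommGroup N'] [Module Aᵐᵒᵖ N']
    (q : M →ₗ[Aᵐᵒᵖ] N') (hq : Function.Surjective q) (f : PP A e β →ₗ[Aᵐᵒᵖ] N') :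
    ∃ g : PP A e β →ₗ[Aᵐᵒᵖ] M, q ∘ₗ g = f := by
  choose y hy using fun j : (Σ i : Fin n, Fin (β i)) => hq (f (basElt A e β j))
  refine ⟨∑ j, opSmulMap A (coordFun A e β j) (y j), ?_⟩
  refine LinearMap.ext fun p => ?_
  rw [LinearMap.comp_apply, LinearMap.sum_apply, map_sum]
  simp only [opSmulMap_apply, map_smul, hy]
  exact sum_smul_coordFun A e hid β f p

section Pairing

variable (β : Fin n → ℕ) (N : Type)
  [AddCommGroup N] [Module k N] [Module Aᵐᵒᵖ N] [IsScalarTower k Aᵐᵒᵖ N]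

/-- The trace pairing `Hom_A(N, νP) → (Hom_A(P, N))*`. -/
noncomputable def pairMap :
    (N →ₗ[Aᵐᵒᵖ] Nu k A (PP A e β)) →ₗ[k] Module.Dual k (PP A e β →ₗ[Aᵐᵒᵖ] N) where
  toFun h :=
  { toFun := fun g => ∑ j : (Σ i : Fin n, Fin (β i)),
      h (g (basElt A e β j)) (coordFun A e β j)
    map_add' := fun g g' => by
      simp only [LinearMap.add_apply, map_add]
      rw [← Finset.sum_add_distrib]
    map_smul' := fun c g => by
      simp only [RingHom.id_apply, smul_eq_mul]
      rw [Finset.mul_sum]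
      refine Finset.sum_congr rfl fun j _ => ?_
      rw [LinearMap.smul_apply, op_map_ksmul k A h c, LinearMap.smul_apply, smul_eq_mul] }
  map_add' h h' := by
    refine LinearMap.ext fun g => ?_
    simp only [LinearMap.coe_mk, AddHom.coe_mk, LinearMap.add_apply]
    rw [← Finset.sum_add_distrib]
  map_smul' c h := by
    refine LinearMap.ext fun g => ?_
    simp only [LinearMap.coe_mk, AddHom.coe_mk, LinearMap.smul_apply, RingHom.id_apply,
      smul_eq_mul]
    rw [Finset.mul_sum]

lemma pairMap_apply (h : N →ₗ[Aᵐᵒᵖ] Nu k A (PP A e β)) (g : PP A e β →ₗ[Aᵐᵒᵖ] N) :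
    pairMap k A e β N h g = ∑ j : (Σ i : Fin n, Fin (β i)),
      h (g (basElt A e β j)) (coordFun A e β j) := rfl

lemma pairMap_opSmulMap (hid : ∀ i, IsIdempotentElem (e i))
    (h : N →ₗ[Aᵐᵒᵖ] Nu k A (PP A e β)) (φ : PP A e β →ₗ[Aᵐᵒᵖ] A) (x : N) :
    pairMap k A e β N h (opSmulMap A φ x) = h x φ := by
  rw [pairMap_apply]
  have step : ∀ j : (Σ i : Fin n, Fin (β i)),
      h (opSmulMap A φ x (basElt A e β j)) (coordFun A e β j)
        = h x (φ (basElt A e β j) • coordFun A e β j) := by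
    intro j
    rw [opSmulMap_apply, map_smul, dual_smul_apply, unop_op]
  rw [Finset.sum_congr rfl fun j _ => step j, ← map_sum, sum_coord_smul_fun A e hid β φ]

lemma pairMap_injective (hid : ∀ i, IsIdempotentElem (e i)) :
    Function.Injective (pairMap k A e β N) := by
  have key : ∀ h : (N →ₗ[Aᵐᵒᵖ] Nu k A (PP A e β)), pairMap k A e β N h = 0 → h = 0 := by
    intro h hh
    refine LinearMap.ext fun x => LinearMap.ext fun φ => ?_
    have h2 := congrArg (fun F : Module.Dual k (PP A e β →ₗ[Aᵐᵒᵖ] N) =>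
      F (opSmulMap A φ x)) hh
    simp only [LinearMap.zero_apply] at h2
    rw [pairMap_opSmulMap k A e β N hid] at h2
    exact h2
  intro h h' heq
  have := key (h - h') (by
    have hs := map_sub (pairMap k A e β N) h h'
    rw [heq, sub_self] at hs
    exact hs)
  exact sub_eq_zero.mp this

/-- The inverse construction: from a functional on `Hom(P,N)` build `N → νP`. -/
noncomputable def unpairMap (lam : Module.Dual k (PP A e β →ₗ[Aᵐᵒᵖ] N)) :
    N →ₗ[Aᵐᵒᵖ] Nu k A (PP A e β) where
  toFun x :=
    { toFun := fun φ => lam (opSmulMap A φ x)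
      map_add' := fun φ φ' => by
        have h1 : opSmulMap A (φ + φ') x = opSmulMap A φ x + opSmulMap A φ' x := by
          refine LinearMap.ext fun p => ?_
          simp only [opSmulMap_apply, LinearMap.add_apply]
          rw [op_add, add_smul]
        show lam (opSmulMap A (φ + φ') x) = lam (opSmulMap A φ x) + lam (opSmulMap A φ' x)
        rw [h1, map_add]
      map_smul' := fun c φ => by
        have h1 : opSmulMap A (c • φ) x = c • opSmulMap A φ x := by
          refine LinearMap.ext fun p => ?_
          simp only [opSmulMap_apply, LinearMap.smul_apply]
          rw [op_smul, smul_assoc]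
        show lam (opSmulMap A (c • φ) x) = (RingHom.id k) c • lam (opSmulMap A φ x)
        rw [h1, map_smul, RingHom.id_apply] }
  map_add' x y := by
    refine LinearMap.ext fun φ => ?_
    have h1 : opSmulMap A φ (x + y) = opSmulMap A φ x + opSmulMap A φ y := by
      refine LinearMap.ext fun p => ?_
      simp only [opSmulMap_apply, LinearMap.add_apply, smul_add]
    show lam (opSmulMap A φ (x + y)) = lam (opSmulMap A φ x) + lam (opSmulMap A φ y)
    rw [h1, map_add]
  map_smul' a x := by
    refine LinearMap.ext fun φ => ?_
    have h1 : opSmulMap A φ (a • x) = opSmulMap A ((unop a) • φ) x := by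
      refine LinearMap.ext fun p => ?_
      simp only [opSmulMap_apply, LinearMap.smul_apply, smul_eq_mul]
      rw [op_mul, op_unop, mul_smul]
    show lam (opSmulMap A φ (a • x)) = lam (opSmulMap A ((unop a) • φ) x)
    rw [h1]

lemma pairMap_surjective (hid : ∀ i, IsIdempotentElem (e i)) :
    Function.Surjective (pairMap k A e β N) := by
  intro lam
  refine ⟨unpairMap k A e β N lam, ?_⟩
  refine LinearMap.ext fun g => ?_
  rw [pairMap_apply]
  show ∑ j : (Σ i : Fin n, Fin (β i)),
      lam (opSmulMap A (coordFun A e β j) (g (basElt A e β j))) = lam g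
  rw [← map_sum, sum_opSmulMap_coordFun A e hid β g]

end Pairing

section Square

variable {βm βp : Fin n → ℕ} (N : Type)
  [AddCommGroup N] [Module k N] [Module Aᵐᵒᵖ N] [IsScalarTower k Aᵐᵒᵖ N]

lemma pair_square (hid : ∀ i, IsIdempotentElem (e i)) (d : PP A e βm →ₗ[Aᵐᵒᵖ] PP A e βp) :
    (homMap k A N d).dualMap ∘ₗ pairMap k A e βm N
      = pairMap k A e βp N ∘ₗ postMap k A N (nuMap k A d) := by
  refine LinearMap.ext fun h => LinearMap.ext fun g => ?_
  show pairMap k A e βm N h (homMap k A N d g) = pairMap k A e βp N (nuMap k A d ∘ₗ h) g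
  rw [pairMap_apply, pairMap_apply]
  have expand : ∀ i : (Σ i : Fin n, Fin (βm i)),
      h ((homMap k A N d g) (basElt A e βm i)) (coordFun A e βm i)
        = ∑ j : (Σ i : Fin n, Fin (βp i)),
            (h (g (basElt A e βp j)))
              ((coordFun A e βp j) (d (basElt A e βm i)) • coordFun A e βm i) := by
    intro i
    show h (g (d (basElt A e βm i))) (coordFun A e βm i) = _
    conv_lhs => rw [← sum_coord_smul_basElt A e hid βp (d (basElt A e βm i))]
    rw [map_sum, map_sum, LinearMap.sum_apply]
    refine Finset.sum_congr rfl fun j _ => ?_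
    rw [map_smul, map_smul, dual_smul_apply, unop_op]
  rw [Finset.sum_congr rfl fun i _ => expand i, Finset.sum_comm]
  refine Finset.sum_congr rfl fun j _ => ?_
  rw [← map_sum]
  show h (g (basElt A e βp j)) _ = h (g (basElt A e βp j)) ((coordFun A e βp j) ∘ₗ d)
  congr 1
  exact sum_coord_smul_fun A e hid βm ((coordFun A e βp j) ∘ₗ d)

end Square

section Rank

lemma finrank_ker_square {V₁ V₂ W₁ W₂ : Type}
    [AddCommGroup V₁] [Module k V₁] [AddCommGroup V₂] [Module k V₂]
    [AddCommGroup W₁] [Module k W₁] [AddCommGroup W₂] [Module k W₂]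
    (a : V₁ →ₗ[k] V₂) (b : W₁ →ₗ[k] W₂) (e₁ : V₁ →ₗ[k] W₁) (e₂ : V₂ →ₗ[k] W₂)
    (h₁ : Function.Bijective e₁) (h₂ : Function.Injective e₂)
    (hsq : b ∘ₗ e₁ = e₂ ∘ₗ a) :
    finrank k (LinearMap.ker a) = finrank k (LinearMap.ker b) := by
  have mem1 : ∀ x : LinearMap.ker a, e₁ (x : V₁) ∈ LinearMap.ker b := by
    rintro ⟨x, hx⟩
    rw [LinearMap.mem_ker] at hx ⊢
    have hc := LinearMap.congr_fun hsq x
    simp only [LinearMap.comp_apply] at hc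
    rw [hc, hx, map_zero]
  let φ : LinearMap.ker a →ₗ[k] LinearMap.ker b :=
    (e₁ ∘ₗ (LinearMap.ker a).subtype).codRestrict (LinearMap.ker b) mem1
  have hbij : Function.Bijective φ := by
    constructor
    · intro x y hxy
      exact Subtype.ext (h₁.1 (congrArg Subtype.val hxy))
    · rintro ⟨y, hy⟩
      obtain ⟨x, rfl⟩ := h₁.2 y
      have hx : a x = 0 := by
        apply h₂
        have hc := LinearMap.congr_fun hsq x
        simp only [LinearMap.comp_apply] at hc
        rw [LinearMap.mem_ker] at hy
        rw [← hc, hy, map_zero]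
      exact ⟨⟨x, LinearMap.mem_ker.mpr hx⟩, Subtype.ext rfl⟩
  exact LinearEquiv.finrank_eq (LinearEquiv.ofBijective φ hbij)

lemma finrank_ker_dualMap {V W : Type}
    [AddCommGroup V] [Module k V] [AddCommGroup W] [Module k W]
    [FiniteDimensional k V] [FiniteDimensional k W] (f : V →ₗ[k] W) :
    finrank k (LinearMap.ker f.dualMap) = finrank k (W ⧸ LinearMap.range f) := by
  have h1 := LinearMap.finrank_range_add_finrank_ker f.dualMap
  rw [Subspace.dual_finrank_eq, LinearMap.finrank_range_dualMap_eq_finrank_range] at h1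
  have h2 := Submodule.finrank_quotient_add_finrank (LinearMap.range f)
  omega

end Rank

section FD

variable [FiniteDimensional k A]

instance fd_projP (i : Fin n) : FiniteDimensional k (projP A e i) :=
  fd_of_opInj k A (projP A e i).subtype Subtype.val_injective

instance fd_PP (β : Fin n → ℕ) : FiniteDimensional k (PP A e β) := by
  infer_instance

instance fd_Nu (β : Fin n → ℕ) : FiniteDimensional k (Nu k A (PP A e β)) := by
  infer_instance

end FD

section Duality

variable [FiniteDimensional k A]

set_option maxHeartbeats 1000000 in
/-- The key duality: `dim Hom(N, ker ν(d)) = dim E(d, N)`. -/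
lemma finrank_hom_nt (hid : ∀ i, IsIdempotentElem (e i))
    {βm βp : Fin n → ℕ} (d : PP A e βm →ₗ[Aᵐᵒᵖ] PP A e βp)
    (Nτ : Type) [AddCommGroup Nτ] [Module k Nτ] [Module Aᵐᵒᵖ Nτ] [IsScalarTower k Aᵐᵒᵖ Nτ]
    (ιτ : Nτ →ₗ[Aᵐᵒᵖ] Nu k A (PP A e βm))
    (hι : Function.Injective ιτ) (hrange : LinearMap.range ιτ = LinearMap.ker (nuMap k A d))
    (N : Type) [AddCommGroup N] [Module k N] [Module Aᵐᵒᵖ N] [IsScalarTower k Aᵐᵒᵖ N]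
    [FiniteDimensional k N] :
    finrank k (N →ₗ[Aᵐᵒᵖ] Nτ) = eNum k A N d := by
  set a := postMap k A N (nuMap k A d) with ha
  have hmem : ∀ h : N →ₗ[Aᵐᵒᵖ] Nτ, postMap k A N ιτ h ∈ LinearMap.ker a := by
    intro h
    rw [LinearMap.mem_ker]
    refine LinearMap.ext fun x => ?_
    show nuMap k A d (ιτ (h x)) = 0
    have hmem2 : ιτ (h x) ∈ LinearMap.ker (nuMap k A d) :=
      hrange ▸ LinearMap.mem_range_self ιτ (h x)
    exact LinearMap.mem_ker.mp hmem2
  let Φ₁ : (N →ₗ[Aᵐᵒᵖ] Nτ) →ₗ[k] LinearMap.ker a :=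
    (postMap k A N ιτ).codRestrict (LinearMap.ker a) hmem
  have hbij : Function.Bijective Φ₁ := by
    constructor
    · intro h h' hhh
      have : postMap k A N ιτ h = postMap k A N ιτ h' := congrArg Subtype.val hhh
      refine LinearMap.ext fun x => hι ?_
      exact LinearMap.congr_fun this x
    · rintro ⟨h', hh'⟩
      rw [LinearMap.mem_ker] at hh'
      have hm : ∀ x, h' x ∈ LinearMap.range ιτ := by
        intro x
        rw [hrange, LinearMap.mem_ker]
        exact LinearMap.congr_fun hh' x
      let eqv := LinearEquiv.ofInjective ιτ hι
      refine ⟨eqv.symm.toLinearMap ∘ₗ h'.codRestrict (LinearMap.range ιτ) hm, ?_⟩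
      refine Subtype.ext (LinearMap.ext fun x => ?_)
      show ιτ (eqv.symm ⟨h' x, hm x⟩) = h' x
      have : ∀ z : LinearMap.range ιτ, ιτ (eqv.symm z) = (z : Nu k A (PP A e βm)) := by
        intro z
        rw [← LinearEquiv.ofInjective_apply ιτ (h := hι) (eqv.symm z)]
        show ((eqv (eqv.symm z) : LinearMap.range ιτ) : Nu k A (PP A e βm)) = (z : _)
        rw [LinearEquiv.apply_symm_apply]
      exact this ⟨h' x, hm x⟩
  have e1 : finrank k (N →ₗ[Aᵐᵒᵖ] Nτ) = finrank k (LinearMap.ker a) :=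
    LinearEquiv.finrank_eq (LinearEquiv.ofBijective Φ₁ hbij)
  have e2 : finrank k (LinearMap.ker a) = finrank k (LinearMap.ker (homMap k A N d).dualMap) :=
    by
      rw [ha]
      exact finrank_ker_square k (a := postMap k A N (nuMap k A d)) (b := (homMap k A N d).dualMap)
        (e₁ := pairMap k A e βm N) (e₂ := pairMap k A e βp N)
        ⟨pairMap_injective k A e βm N hid, pairMap_surjective k A e βm N hid⟩
        (pairMap_injective k A e βp N hid)
        (pair_square k A e N hid d)
  have e3 := finrank_ker_dualMap k (homMap k A N d)
  rw [e1, e2, e3]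
  rfl

end Duality

section Utils

variable [FiniteDimensional k A]

lemma fd_opSub {M : Type} [AddCommGroup M] [Module k M] [Module Aᵐᵒᵖ M]
    [IsScalarTower k Aᵐᵒᵖ M] [FiniteDimensional k M] (p : Submodule Aᵐᵒᵖ M) :
    FiniteDimensional k p :=
  fd_of_opInj k A p.subtype Subtype.val_injective

lemma fd_opQuot {M : Type} [AddCommGroup M] [Module k M] [Module Aᵐᵒᵖ M]
    [IsScalarTower k Aᵐᵒᵖ M] [FiniteDimensional k M] (p : Submodule Aᵐᵒᵖ M) :
    FiniteDimensional k (M ⧸ p) :=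
  fd_of_opSurj k A p.mkQ p.mkQ_surjective

lemma eNum_eq_zero_of_surj {βm βp : Fin n → ℕ} (d : PP A e βm →ₗ[Aᵐᵒᵖ] PP A e βp)
    (M : Type) [AddCommGroup M] [Module k M] [Module Aᵐᵒᵖ M] [IsScalarTower k Aᵐᵒᵖ M]
    (hs : Function.Surjective (homMap k A M d)) : eNum k A M d = 0 := by
  haveI : Subsingleton ((PP A e βm →ₗ[Aᵐᵒᵖ] M) ⧸ LinearMap.range (homMap k A M d)) :=
    Submodule.Quotient.subsingleton_iff.mpr (LinearMap.range_eq_top.mpr hs)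
  exact finrank_zero_of_subsingleton

lemma hom_all_zero {M M' : Type}
    [AddCommGroup M] [Module k M] [Module Aᵐᵒᵖ M] [IsScalarTower k Aᵐᵒᵖ M]
    [AddCommGroup M'] [Module k M'] [Module Aᵐᵒᵖ M'] [IsScalarTower k Aᵐᵒᵖ M']
    [FiniteDimensional k M] [FiniteDimensional k M']
    (h : finrank k (M →ₗ[Aᵐᵒᵖ] M') = 0) : ∀ φ : M →ₗ[Aᵐᵒᵖ] M', φ = 0 := by
  intro φ
  haveI : Subsingleton (M →ₗ[Aᵐᵒᵖ] M') := finrank_zero_iff.mp h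
  exact Subsingleton.elim φ 0

lemma homMap_surj_of_surj (hid : ∀ i, IsIdempotentElem (e i)) {βm βp : Fin n → ℕ}
    (d : PP A e βm →ₗ[Aᵐᵒᵖ] PP A e βp) (M M' : Type)
    [AddCommGroup M] [Module k M] [Module Aᵐᵒᵖ M] [IsScalarTower k Aᵐᵒᵖ M]
    [AddCommGroup M'] [Module k M'] [Module Aᵐᵒᵖ M'] [IsScalarTower k Aᵐᵒᵖ M']
    (ρ : M →ₗ[Aᵐᵒᵖ] M') (hρ : Function.Surjective ρ)
    (hs : Function.Surjective (homMap k A M d)) :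
    Function.Surjective (homMap k A M' d) := by
  intro f
  obtain ⟨fh, hfh⟩ := pp_lift A e hid βm ρ hρ f
  obtain ⟨g, hg⟩ := hs fh
  refine ⟨ρ ∘ₗ g, ?_⟩
  have hg' : g ∘ₗ d = fh := hg
  show (ρ ∘ₗ g) ∘ₗ d = f
  rw [LinearMap.comp_assoc, hg', hfh]

/-- Factor a map through an injection containing its range. -/
lemma factor_through_inj {X Y Z : Type}
    [AddCommGroup X] [Module Aᵐᵒᵖ X] [AddCommGroup Y] [Module Aᵐᵒᵖ Y]
    [AddCommGroup Z] [Module Aᵐᵒᵖ Z]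
    (jE : Z →ₗ[Aᵐᵒᵖ] Y) (hj : Function.Injective jE) (f : X →ₗ[Aᵐᵒᵖ] Y)
    (hf : ∀ x, f x ∈ LinearMap.range jE) : ∃ v : X →ₗ[Aᵐᵒᵖ] Z, jE ∘ₗ v = f := by
  let eqv := LinearEquiv.ofInjective jE hj
  refine ⟨eqv.symm.toLinearMap ∘ₗ f.codRestrict (LinearMap.range jE) hf, ?_⟩
  refine LinearMap.ext fun x => ?_
  show jE (eqv.symm ⟨f x, hf x⟩) = f x
  rw [← LinearEquiv.ofInjective_apply jE (h := hj) (eqv.symm ⟨f x, hf x⟩)]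
  show ((eqv (eqv.symm ⟨f x, hf x⟩) : LinearMap.range jE) : Y) = f x
  rw [LinearEquiv.apply_symm_apply]

lemma eq_smul_of_finrank_one {V : Type} [AddCommGroup V] [Module k V]
    [FiniteDimensional k V] (h1 : finrank k V = 1) {g : V} (hg : g ≠ 0) (v : V) :
    ∃ c : k, v = c • g := by
  have hsp : Submodule.span k {g} = ⊤ := by
    apply Submodule.eq_top_of_finrank_eq
    rw [finrank_span_singleton hg, h1]
  have hv : v ∈ Submodule.span k {g} := hsp ▸ Submodule.mem_top
  obtain ⟨c, hc⟩ := Submodule.mem_span_singleton.mp hv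
  exact ⟨c, hc.symm⟩

lemma inj_of_surj_finrank {V W : Type} [AddCommGroup V] [Module k V]
    [AddCommGroup W] [Module k W] [FiniteDimensional k V] [FiniteDimensional k W]
    (f : V →ₗ[k] W) (hs : Function.Surjective f) (hfr : finrank k V = finrank k W) :
    Function.Injective f := by
  have h1 := LinearMap.finrank_range_add_finrank_ker f
  have h2 : LinearMap.range f = ⊤ := LinearMap.range_eq_top.mpr hs
  rw [h2, finrank_top] at h1
  have h3 : finrank k (LinearMap.ker f) = 0 := by omega
  rw [← LinearMap.ker_eq_bot]
  exact Submodule.finrank_eq_zero.mp h3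

end Utils

end Aux

set_option maxHeartbeats 4000000 in
set_option synthInstance.maxHeartbeats 400000 in
/-- Construction of the real Schur representation attached to an
exchange pair: with `d₀, d₋, d₊` as in the hypotheses, `L := Coker d₊` and
`N^τ := ker ν(d₋)` (realized as any module `Nτ` embedded in `ν(P₋)` with image
`ker ν(d₋)`), we have `dim_k Hom_A(L, N^τ) = 1`, and the image `I` of any nonzero
homomorphism `L → N^τ` satisfies `Hom(Coker d₀, I) = 0`, `E(d₀,I) = 0`,
`dim Hom(Coker d₊, I) = 1`, `E(d₊,I) = 0`, `Hom(Coker d₋, I) = 0`, `dim E(d₋,I) = 1`;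
moreover `End_A(I) = k` and `Ext¹_A(I,I) = 0`. -/
theorem statement16 (k : Type) [Field k] [IsAlgClosed k] [CharZero k]
    (A : Type) [Ring A] [Algebra k A] [FiniteDimensional k A]
    {n : ℕ} (e : Fin n → A) (hA : IsBasicSetup A e)
    (β0m β0p βmm βmp βpm βpp : Fin n → ℕ)
    (d0 : PP A e β0m →ₗ[Aᵐᵒᵖ] PP A e β0p)
    (dm : PP A e βmm →ₗ[Aᵐᵒᵖ] PP A e βmp)
    (dp : PP A e βpm →ₗ[Aᵐᵒᵖ] PP A e βpp)
    (hrig0p : Function.Surjective (homMap k A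
      ((PP A e β0p × PP A e βpp) ⧸ LinearMap.range (LinearMap.prodMap d0 dp))
      (LinearMap.prodMap d0 dp)))
    (hm0 : Function.Surjective (homMap k A (Coker A e d0) dm))
    (hmm : Function.Surjective (homMap k A (Coker A e dm) dm))
    (hmp : eNum k A (Coker A e dp) dm = 1) :
    ∀ (Nτ : Type) (igN : AddCommGroup Nτ), letI := igN;
    ∀ (ikN : Module k Nτ) (imN : Module Aᵐᵒᵖ Nτ), letI := ikN; letI := imN;
    ∀ (itN : IsScalarTower k Aᵐᵒᵖ Nτ), letI := itN;
    ∀ (ιτ : Nτ →ₗ[Aᵐᵒᵖ] Nu k A (PP A e βmm)),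
      Function.Injective ιτ → LinearMap.range ιτ = LinearMap.ker (nuMap k A dm) →
      finrank k (Coker A e dp →ₗ[Aᵐᵒᵖ] Nτ) = 1 ∧
      (∀ g : Coker A e dp →ₗ[Aᵐᵒᵖ] Nτ, g ≠ 0 →
        ∀ (I : Type) (igI : AddCommGroup I), letI := igI;
        ∀ (ikI : Module k I) (imI : Module Aᵐᵒᵖ I), letI := ikI; letI := imI;
        ∀ (itI : IsScalarTower k Aᵐᵒᵖ I), letI := itI;
        ∀ (π : Coker A e dp →ₗ[Aᵐᵒᵖ] I) (ι : I →ₗ[Aᵐᵒᵖ] Nτ),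
          Function.Surjective π → Function.Injective ι → ι ∘ₗ π = g →
          ((∀ φ : Coker A e d0 →ₗ[Aᵐᵒᵖ] I, φ = 0) ∧
            Function.Surjective (homMap k A I d0)) ∧
          (finrank k (Coker A e dp →ₗ[Aᵐᵒᵖ] I) = 1 ∧
            Function.Surjective (homMap k A I dp)) ∧
          ((∀ φ : Coker A e dm →ₗ[Aᵐᵒᵖ] I, φ = 0) ∧ eNum k A I dm = 1) ∧
          (∀ φ : I →ₗ[Aᵐᵒᵖ] I, ∃ c : k, φ = c • (LinearMap.id : I →ₗ[Aᵐᵒᵖ] I)) ∧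
          Ext1SelfVanishes A I) := by
  intro Nτ igN
  letI := igN
  intro ikN imN
  letI := ikN; letI := imN
  intro itN
  letI := itN
  intro ιτ hιinj hιrange
  have hid : ∀ i, IsIdempotentElem (e i) := hA.1
  haveI fdNτ : FiniteDimensional k Nτ := fd_of_opInj k A ιτ hιinj
  haveI fdL : FiniteDimensional k (Coker A e dp) := fd_opQuot k A (LinearMap.range dp)
  have hdim1 : finrank k (Coker A e dp →ₗ[Aᵐᵒᵖ] Nτ) = 1 := by
    rw [finrank_hom_nt k A e hid dm Nτ ιτ hιinj hιrange (Coker A e dp)]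
    exact hmp
  refine ⟨hdim1, ?_⟩
  intro g hg I igI
  letI := igI
  intro ikI imI
  letI := ikI; letI := imI
  intro itI
  letI := itI
  intro π ι hπ hι hcomp
  haveI fdI : FiniteDimensional k I := fd_of_opInj k A ι hι
  have hπ0 : π ≠ 0 := fun h => hg (by rw [← hcomp, h, LinearMap.comp_zero])
  have hι0 : ι ≠ 0 := fun h => hg (by rw [← hcomp, h, LinearMap.zero_comp])
  -- Hom(Coker d0, I) = 0
  haveI fdC0 : FiniteDimensional k (Coker A e d0) := fd_opQuot k A (LinearMap.range d0)
  have hC0 : ∀ φ : Coker A e d0 →ₗ[Aᵐᵒᵖ] I, φ = 0 := by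
    have hz : finrank k (Coker A e d0 →ₗ[Aᵐᵒᵖ] Nτ) = 0 := by
      rw [finrank_hom_nt k A e hid dm Nτ ιτ hιinj hιrange (Coker A e d0)]
      exact eNum_eq_zero_of_surj k A e dm (Coker A e d0) hm0
    intro φ
    have h1 : ι ∘ₗ φ = 0 := hom_all_zero k A hz (ι ∘ₗ φ)
    refine LinearMap.ext fun x => hι ?_
    exact (LinearMap.congr_fun h1 x).trans (map_zero ι).symm
  -- Hom(Coker dm, I) = 0
  haveI fdCm : FiniteDimensional k (Coker A e dm) := fd_opQuot k A (LinearMap.range dm)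
  have hCm : ∀ φ : Coker A e dm →ₗ[Aᵐᵒᵖ] I, φ = 0 := by
    have hz : finrank k (Coker A e dm →ₗ[Aᵐᵒᵖ] Nτ) = 0 := by
      rw [finrank_hom_nt k A e hid dm Nτ ιτ hιinj hιrange (Coker A e dm)]
      exact eNum_eq_zero_of_surj k A e dm (Coker A e dm) hmm
    intro φ
    have h1 : ι ∘ₗ φ = 0 := hom_all_zero k A hz (ι ∘ₗ φ)
    refine LinearMap.ext fun x => hι ?_
    exact (LinearMap.congr_fun h1 x).trans (map_zero ι).symm
  -- the rigid bimodule M' and the surjection onto Coker dp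
  have hle : LinearMap.range (LinearMap.prodMap d0 dp) ≤
      LinearMap.ker ((LinearMap.range dp).mkQ ∘ₗ LinearMap.snd Aᵐᵒᵖ (PP A e β0p) (PP A e βpp)) := by
    rintro z ⟨w, rfl⟩
    rw [LinearMap.mem_ker]
    show (LinearMap.range dp).mkQ (dp w.2) = 0
    rw [Submodule.mkQ_apply, Submodule.Quotient.mk_eq_zero]
    exact LinearMap.mem_range_self dp w.2
  set ρ : ((PP A e β0p × PP A e βpp) ⧸ LinearMap.range (LinearMap.prodMap d0 dp))
      →ₗ[Aᵐᵒᵖ] Coker A e dp :=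
    Submodule.liftQ _ _ hle with hρdef
  have hρsurj : Function.Surjective ρ := by
    intro y
    obtain ⟨yb, rfl⟩ := (LinearMap.range dp).mkQ_surjective y
    refine ⟨Submodule.Quotient.mk ((0 : PP A e β0p), yb), ?_⟩
    rw [hρdef, Submodule.liftQ_apply]
    rfl
  have hd0M' : Function.Surjective (homMap k A
      ((PP A e β0p × PP A e βpp) ⧸ LinearMap.range (LinearMap.prodMap d0 dp)) d0) := by
    intro f
    obtain ⟨G, hG⟩ := hrig0p (f ∘ₗ LinearMap.fst Aᵐᵒᵖ (PP A e β0m) (PP A e βpm))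
    refine ⟨G ∘ₗ LinearMap.inl Aᵐᵒᵖ (PP A e β0p) (PP A e βpp), ?_⟩
    refine LinearMap.ext fun x => ?_
    have h2 := LinearMap.congr_fun hG (x, 0)
    show G (d0 x, 0) = f x
    have h3 : (LinearMap.prodMap d0 dp) ((x : PP A e β0m), (0 : PP A e βpm)) = (d0 x, 0) := by
      simp [LinearMap.prodMap_apply]
    calc G (d0 x, 0) = G ((LinearMap.prodMap d0 dp) (x, 0)) := by rw [h3]
      _ = f x := h2
  have hdpM' : Function.Surjective (homMap k A
      ((PP A e β0p × PP A e βpp) ⧸ LinearMap.range (LinearMap.prodMap d0 dp)) dp) := by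
    intro f
    obtain ⟨G, hG⟩ := hrig0p (f ∘ₗ LinearMap.snd Aᵐᵒᵖ (PP A e β0m) (PP A e βpm))
    refine ⟨G ∘ₗ LinearMap.inr Aᵐᵒᵖ (PP A e β0p) (PP A e βpp), ?_⟩
    refine LinearMap.ext fun x => ?_
    have h2 := LinearMap.congr_fun hG (0, x)
    show G (0, dp x) = f x
    have h3 : (LinearMap.prodMap d0 dp) ((0 : PP A e β0m), (x : PP A e βpm)) = (0, dp x) := by
      simp [LinearMap.prodMap_apply]
    calc G (0, dp x) = G ((LinearMap.prodMap d0 dp) (0, x)) := by rw [h3]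
      _ = f x := h2
  have hLd0 : Function.Surjective (homMap k A (Coker A e dp) d0) :=
    homMap_surj_of_surj k A e hid d0 _ _ ρ hρsurj hd0M'
  have hId0 : Function.Surjective (homMap k A I d0) :=
    homMap_surj_of_surj k A e hid d0 _ _ π hπ hLd0
  have hLdp : Function.Surjective (homMap k A (Coker A e dp) dp) :=
    homMap_surj_of_surj k A e hid dp _ _ ρ hρsurj hdpM'
  have hIdp : Function.Surjective (homMap k A I dp) :=
    homMap_surj_of_surj k A e hid dp _ _ π hπ hLdp
  -- dim Hom(L, I) = 1
  have hLI1 : finrank k (Coker A e dp →ₗ[Aᵐᵒᵖ] I) = 1 := by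
    have hpostι_inj : Function.Injective (postMap k A (Coker A e dp) ι) := by
      intro u v huv
      refine LinearMap.ext fun x => hι ?_
      exact LinearMap.congr_fun huv x
    have hle1 := LinearMap.finrank_le_finrank_of_injective (f := postMap k A (Coker A e dp) ι)
      hpostι_inj
    rw [hdim1] at hle1
    have hge : 0 < finrank k (Coker A e dp →ₗ[Aᵐᵒᵖ] I) :=
      finrank_pos_iff.mpr (nontrivial_of_ne π 0 hπ0)
    omega
  -- dim Hom(I, Nτ) = 1, hence eNum I dm = 1
  have hINτ : finrank k (I →ₗ[Aᵐᵒᵖ] Nτ) = 1 := by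
    have hprecomp_inj : Function.Injective (homMap k A Nτ π) := by
      intro u v huv
      refine LinearMap.ext fun y => ?_
      obtain ⟨x, rfl⟩ := hπ y
      exact LinearMap.congr_fun huv x
    have hle1 := LinearMap.finrank_le_finrank_of_injective (f := homMap k A Nτ π) hprecomp_inj
    rw [hdim1] at hle1
    have hge : 0 < finrank k (I →ₗ[Aᵐᵒᵖ] Nτ) :=
      finrank_pos_iff.mpr (nontrivial_of_ne ι 0 hι0)
    omega
  have hIdm1 : eNum k A I dm = 1 := by
    rw [← finrank_hom_nt k A e hid dm Nτ ιτ hιinj hιrange I]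
    exact hINτ
  -- End(I) = k
  have hEnd : ∀ φ : I →ₗ[Aᵐᵒᵖ] I, ∃ c : k, φ = c • (LinearMap.id : I →ₗ[Aᵐᵒᵖ] I) := by
    intro φ
    obtain ⟨c, hc⟩ := eq_smul_of_finrank_one k hdim1 hg (ι ∘ₗ φ ∘ₗ π)
    refine ⟨c, ?_⟩
    refine LinearMap.ext fun y => ?_
    obtain ⟨x, rfl⟩ := hπ y
    apply hι
    have h3 := LinearMap.congr_fun hc x
    rw [LinearMap.smul_apply] at h3
    show ι (φ (π x)) = ι ((c • (LinearMap.id : I →ₗ[Aᵐᵒᵖ] I)) (π x))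
    have h4 : ((c • (LinearMap.id : I →ₗ[Aᵐᵒᵖ] I)) (π x)) = c • π x := rfl
    rw [h4, op_map_ksmul k A ι c (π x)]
    rw [← hcomp] at h3
    exact h3
  -- Ext¹(I, I) = 0
  have hExt : Ext1SelfVanishes A I := by
    intro E igE
    letI := igE
    intro imE
    letI := imE
    intro jE qE hjinj hqsurj hjk
    obtain ⟨u, hu⟩ := pp_lift A e hid βpp qE hqsurj (π ∘ₗ (LinearMap.range dp).mkQ)
    have hudp : ∀ x, (u ∘ₗ dp) x ∈ LinearMap.range jE := by
      intro x
      rw [hjk, LinearMap.mem_ker]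
      show qE (u (dp x)) = 0
      have h2 := LinearMap.congr_fun hu (dp x)
      have h3 : (LinearMap.range dp).mkQ (dp x) = 0 := by
        rw [Submodule.mkQ_apply, Submodule.Quotient.mk_eq_zero]
        exact LinearMap.mem_range_self dp x
      calc qE (u (dp x)) = π ((LinearMap.range dp).mkQ (dp x)) := h2
        _ = 0 := by rw [h3, map_zero]
    obtain ⟨v, hv⟩ := factor_through_inj A jE hjinj (u ∘ₗ dp) hudp
    obtain ⟨w, hw⟩ := hIdp v
    have hw' : w ∘ₗ dp = v := hw
    have hu'dp : ∀ x, (u - jE ∘ₗ w) (dp x) = 0 := by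
      intro x
      show u (dp x) - jE (w (dp x)) = 0
      have h4 : jE (v x) = u (dp x) := LinearMap.congr_fun hv x
      have h5 : w (dp x) = v x := LinearMap.congr_fun hw' x
      have h6 : jE (w (dp x)) = u (dp x) := by rw [h5, h4]
      rw [h6, sub_self]
    have hle2 : LinearMap.range dp ≤ LinearMap.ker (u - jE ∘ₗ w) := by
      rintro z ⟨x, rfl⟩
      exact LinearMap.mem_ker.mpr (hu'dp x)
    set h := Submodule.liftQ (LinearMap.range dp) (u - jE ∘ₗ w) hle2 with hhdef
    have hqh : ∀ x : PP A e βpp, qE (h (Submodule.Quotient.mk x)) = π (Submodule.Quotient.mk x) := by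
      intro x
      rw [hhdef, Submodule.liftQ_apply]
      show qE (u x - jE (w x)) = _
      rw [map_sub]
      have h6 : qE (jE (w x)) = 0 := by
        have hm6 : jE (w x) ∈ LinearMap.ker qE := hjk ▸ LinearMap.mem_range_self jE (w x)
        exact LinearMap.mem_ker.mp hm6
      rw [h6, sub_zero]
      exact LinearMap.congr_fun hu x
    -- E(dm, ker π) = 0
    haveI fdK : FiniteDimensional k (LinearMap.ker π) := fd_opSub k A (LinearMap.ker π)
    have hTS : Function.Surjective (homMap k A (LinearMap.ker π) dm) := by
      intro f
      set fL := (LinearMap.ker π).subtype ∘ₗ f with hfL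
      have hcond : LinearMap.range (homMap k A (Coker A e dp) dm) ≤
          Submodule.comap (postMap k A (PP A e βmm) π)
            (LinearMap.range (homMap k A I dm)) := by
        rintro z ⟨gq, rfl⟩
        refine ⟨π ∘ₗ gq, ?_⟩
        show (π ∘ₗ gq) ∘ₗ dm = π ∘ₗ (gq ∘ₗ dm)
        rw [LinearMap.comp_assoc]
      set Ψ := Submodule.mapQ (LinearMap.range (homMap k A (Coker A e dp) dm))
        (LinearMap.range (homMap k A I dm)) (postMap k A (PP A e βmm) π) hcond with hΨdef
      have hΨsurj : Function.Surjective Ψ := by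
        intro y
        obtain ⟨yb, rfl⟩ := (LinearMap.range (homMap k A I dm)).mkQ_surjective y
        obtain ⟨yl, hyl⟩ := pp_lift A e hid βmm π hπ yb
        refine ⟨(LinearMap.range (homMap k A (Coker A e dp) dm)).mkQ yl, ?_⟩
        rw [hΨdef, Submodule.mkQ_apply, Submodule.mapQ_apply, Submodule.mkQ_apply]
        have : postMap k A (PP A e βmm) π yl = yb := hyl
        rw [this]
      have hΨinj : Function.Injective Ψ := by
        apply inj_of_surj_finrank k Ψ hΨsurj
        show eNum k A (Coker A e dp) dm = eNum k A I dm
        rw [hmp, hIdm1]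
      have hπfL : postMap k A (PP A e βmm) π fL = 0 :=
        LinearMap.ext fun x => LinearMap.mem_ker.mp (f x).2
      have hfL0 : Ψ ((LinearMap.range (homMap k A (Coker A e dp) dm)).mkQ fL) = 0 := by
        rw [hΨdef, Submodule.mkQ_apply, Submodule.mapQ_apply, hπfL]
        exact (Submodule.Quotient.mk_eq_zero _).mpr (Submodule.zero_mem _)
      have hfLmem : fL ∈ LinearMap.range (homMap k A (Coker A e dp) dm) := by
        have hmk0 : (LinearMap.range (homMap k A (Coker A e dp) dm)).mkQ fL = 0 := by
          apply hΨinj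
          rw [hfL0]
          exact (Ψ.map_zero).symm
        rw [Submodule.mkQ_apply, Submodule.Quotient.mk_eq_zero] at hmk0
        exact hmk0
      obtain ⟨g', hg'⟩ := hfLmem
      have hg'' : g' ∘ₗ dm = fL := hg'
      have hπg' : π ∘ₗ g' = 0 := by
        have hker : LinearMap.range dm ≤ LinearMap.ker (π ∘ₗ g') := by
          rintro z ⟨x, rfl⟩
          rw [LinearMap.mem_ker]
          show π (g' (dm x)) = 0
          have h7 : g' (dm x) = fL x := LinearMap.congr_fun hg'' x
          rw [h7]
          exact LinearMap.mem_ker.mp (f x).2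
        have hφm0 : Submodule.liftQ (LinearMap.range dm) (π ∘ₗ g') hker = 0 :=
          hCm (Submodule.liftQ (LinearMap.range dm) (π ∘ₗ g') hker)
        refine LinearMap.ext fun x => ?_
        have h8 : Submodule.liftQ (LinearMap.range dm) (π ∘ₗ g') hker
            (Submodule.Quotient.mk x) = (π ∘ₗ g') x := Submodule.liftQ_apply _ _ _
        rw [hφm0] at h8
        exact h8.symm
      refine ⟨g'.codRestrict (LinearMap.ker π) (fun p => ?_), ?_⟩
      · rw [LinearMap.mem_ker]
        exact LinearMap.congr_fun hπg' p
      · refine LinearMap.ext fun x => Subtype.ext ?_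
        show g' (dm x) = ((f x : Coker A e dp))
        have h9 : g' (dm x) = fL x := LinearMap.congr_fun hg'' x
        rw [h9]
        rfl
    have hKzero : ∀ t : (LinearMap.ker π) →ₗ[Aᵐᵒᵖ] Nτ, t = 0 := by
      apply hom_all_zero k A
      rw [finrank_hom_nt k A e hid dm Nτ ιτ hιinj hιrange (LinearMap.ker π)]
      exact eNum_eq_zero_of_surj k A e dm (LinearMap.ker π) hTS
    have hhK : h ∘ₗ (LinearMap.ker π).subtype = 0 := by
      have hmem3 : ∀ z : LinearMap.ker π,
          (h ∘ₗ (LinearMap.ker π).subtype) z ∈ LinearMap.range jE := by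
        intro z
        rw [hjk, LinearMap.mem_ker]
        show qE (h (z : Coker A e dp)) = 0
        obtain ⟨x, hx⟩ := (LinearMap.range dp).mkQ_surjective (z : Coker A e dp)
        rw [Submodule.mkQ_apply] at hx
        rw [← hx, hqh x, hx]
        exact LinearMap.mem_ker.mp z.2
      obtain ⟨t, ht⟩ := factor_through_inj A jE hjinj (h ∘ₗ (LinearMap.ker π).subtype) hmem3
      have htν : ι ∘ₗ t = 0 := hKzero (ι ∘ₗ t)
      have ht0 : t = 0 := by
        refine LinearMap.ext fun z => hι ?_
        exact (LinearMap.congr_fun htν z).trans (map_zero ι).symm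
      rw [← ht, ht0, LinearMap.comp_zero]
    have hKle : LinearMap.ker π ≤ LinearMap.ker h := by
      intro z hz
      rw [LinearMap.mem_ker]
      exact LinearMap.congr_fun hhK ⟨z, hz⟩
    refine ⟨Submodule.liftQ (LinearMap.ker π) h hKle ∘ₗ
      (π.quotKerEquivOfSurjective hπ).symm.toLinearMap, ?_⟩
    refine LinearMap.ext fun y => ?_
    obtain ⟨x, rfl⟩ := hπ y
    show qE (Submodule.liftQ (LinearMap.ker π) h hKle
      ((π.quotKerEquivOfSurjective hπ).symm (π x))) = π x
    have hηx : (π.quotKerEquivOfSurjective hπ).symm (π x) = Submodule.Quotient.mk x := by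
      apply (π.quotKerEquivOfSurjective hπ).injective
      rw [LinearEquiv.apply_symm_apply]
      rfl
    rw [hηx, Submodule.liftQ_apply]
    obtain ⟨p, hp⟩ := (LinearMap.range dp).mkQ_surjective x
    rw [Submodule.mkQ_apply] at hp
    rw [← hp]
    exact hqh p
  exact ⟨⟨hC0, hId0⟩, ⟨hLI1, hIdp⟩, ⟨hCm, hIdm1⟩, hEnd, hExt⟩
end

section
/- Let I be a right ideal of A such that I is the unique right ideal of A with its dimension vector, i.e., every right ideal J of A with dim_k(J e_i) = dim_k(I e_i) for all i = 1, …, n satisfies J = I. Then I is a two-sided ideal of A. -/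
open TropGP Module MulOpposite

namespace Statement17Aux

open TropGP Module MulOpposite

variable (k : Type) [Field k] (A : Type) [Ring A] [Algebra k A]
variable {n : ℕ} (e : Fin n → A)

/-- Left multiplication by `u` as a right-`A`-module (i.e. `Aᵐᵒᵖ`-linear) endomorphism. -/
def lmulOp (u : A) : A →ₗ[Aᵐᵒᵖ] A where
  toFun x := u * x
  map_add' x y := mul_add u x y
  map_smul' a x := by
    simp [MulOpposite.smul_eq_mul_unop, mul_assoc]

@[simp] lemma lmulOp_apply (u x : A) : lmulOp A u x = u * x := rfl

/-- Left multiplication by a unit as a `k`-linear equivalence. -/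
noncomputable def lmulEquiv (u : Aˣ) : A ≃ₗ[k] A where
  toFun x := (u : A) * x
  invFun x := ((u⁻¹ : Aˣ) : A) * x
  map_add' x y := mul_add _ x y
  map_smul' c x := (Algebra.mul_smul_comm c _ x)
  left_inv x := by simp [← mul_assoc]
  right_inv x := by simp [← mul_assoc]

lemma finrank_rmul_eq (L : Submodule Aᵐᵒᵖ A) (i : Fin n) :
    finrank k (LinearMap.range (rmul k A e (↥L) i))
      = finrank k ((L.restrictScalars k).map (rmul k A e A i)) := by
  set ι : ↥L →ₗ[k] A := (L.subtype).restrictScalars k with hι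
  have hinj : Function.Injective ι := Subtype.val_injective
  have h1 : (LinearMap.range (rmul k A e (↥L) i)).map ι
      = (L.restrictScalars k).map (rmul k A e A i) := by
    have hcomm : ι ∘ₗ rmul k A e (↥L) i = (rmul k A e A i) ∘ₗ ι := by
      ext x; rfl
    rw [← LinearMap.range_comp, hcomm, LinearMap.range_comp]
    congr 1
    ext x
    simp [hι]
  rw [← h1]
  exact (Submodule.equivMapOfInjective ι hinj _).finrank_eq

lemma dimVec_map_lmul (u : Aˣ) (L : Submodule Aᵐᵒᵖ A) (i : Fin n) :
    dimVec k A e (↥(L.map (lmulOp A (u : A)))) i = dimVec k A e (↥L) i := by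
  unfold dimVec
  rw [finrank_rmul_eq, finrank_rmul_eq]
  congr 1
  have key : ((L.map (lmulOp A (u : A))).restrictScalars k).map (rmul k A e A i)
      = ((L.restrictScalars k).map (rmul k A e A i)).map
          ((lmulEquiv k A u : A →ₗ[k] A)) := by
    ext x
    simp only [Submodule.mem_map, Submodule.restrictScalars_mem, Submodule.mem_map,
      lmulEquiv, LinearEquiv.coe_coe, LinearEquiv.coe_mk, LinearMap.coe_mk, AddHom.coe_mk]
    constructor
    · rintro ⟨y, ⟨z, hz, rfl⟩, rfl⟩
      refine ⟨op (e i) • z, ⟨z, hz, rfl⟩, ?_⟩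
      simp [rmul, MulOpposite.smul_eq_mul_unop, mul_assoc]
    · rintro ⟨y, ⟨z, hz, rfl⟩, rfl⟩
      refine ⟨(u : A) * z, ⟨z, hz, rfl⟩, ?_⟩
      simp [rmul, MulOpposite.smul_eq_mul_unop, mul_assoc]
  rw [key]
  exact (lmulEquiv k A u).finrank_map_eq _

lemma exists_unit_part (a : A) [IsAlgClosed k] [CharZero k] [FiniteDimensional k A] :
    ∃ (c : k) (u : Aˣ), (u : A) = algebraMap k A c - a := by
  have hfin : (spectrum k (Algebra.lmul k A a)).Finite :=
    Module.End.finite_spectrum _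
  obtain ⟨c, hc⟩ : ∃ c : k, c ∉ spectrum k (Algebra.lmul k A a) := by
    have := hfin.infinite_compl
    obtain ⟨c, hc⟩ := this.nonempty
    exact ⟨c, hc⟩
  have hu : IsUnit (algebraMap k A c - a) := by
    have h1 : IsUnit (algebraMap k (Module.End k A) c - Algebra.lmul k A a) := by
      simpa [spectrum.mem_iff] using hc
    have h2 : Algebra.lmul k A (algebraMap k A c - a)
        = algebraMap k (Module.End k A) c - Algebra.lmul k A a := by
      rw [map_sub, AlgHom.commutes]
    rw [← Algebra.lmul_isUnit_iff (R := k), h2]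
    exact h1
  obtain ⟨u, hu⟩ := hu
  exact ⟨c, u, hu⟩

end Statement17Aux


/-- A right ideal `I` of `A` which is the unique right ideal with its
dimension vector is a two-sided ideal. -/
theorem statement17 (k : Type) [Field k] [IsAlgClosed k] [CharZero k]
    (A : Type) [Ring A] [Algebra k A] [FiniteDimensional k A]
    {n : ℕ} (e : Fin n → A) (hA : IsBasicSetup A e)
    (I : Submodule Aᵐᵒᵖ A)
    (huniq : ∀ J : Submodule Aᵐᵒᵖ A, dimVec k A e J = dimVec k A e I → J = I) :
    ∀ a : A, ∀ x ∈ I, a * x ∈ I := by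
  classical
  intro a x hx
  obtain ⟨c, u, huc⟩ := Statement17Aux.exists_unit_part k A a
  -- the image of `I` under left multiplication by the unit `u` is a right ideal
  -- with the same dimension vector, hence equals `I`.
  have hJ : I.map (Statement17Aux.lmulOp A (u : A)) = I := by
    apply huniq
    funext i
    exact Statement17Aux.dimVec_map_lmul k A e u I i
  have hux : (u : A) * x ∈ I := by
    rw [← hJ]
    exact ⟨x, hx, rfl⟩
  have hcx : algebraMap k A c * x ∈ I := by
    have : algebraMap k A c * x = op (algebraMap k A c) • x := by
      simp [MulOpposite.smul_eq_mul_unop, Algebra.commutes]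
    rw [this]
    exact I.smul_mem _ hx
  have : a * x = algebraMap k A c * x - (u : A) * x := by
    rw [huc]; noncomm_ring
  rw [this]
  exact sub_mem hcx hux
end
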